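/- Let $n_1, n_2$ be integers greater than 1, and set $g = \gcd(1-4n_1^2,\ 1-4n_2^2,\ 1-4n_1n_2)$, $h = \gcd(1-2n_1,\ 1-2n_2)$, $k = \gcd(1+2n_1,\ 1+2n_2)$. Then $g = h\cdot k$. -/

import Mathlib

theorem stmt_4 (n₁ n₂ : ℤ) (h₁ : 1 < n₁) (h₂ : 1 < n₂)
    (g h k : ℕ)
    (hg : g = Int.gcd (1 - 4*n₁^2) (Int.gcd (1 - 4*n₂^2) (1 - 4*n₁*n₂)))
    (hh : h = Int.gcd (1 - 2*n₁) (1 - 2*n₂))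
    (hk : k = Int.gcd (1 + 2*n₁) (1 + 2*n₂)) :
    g = h * k := by
  set a : ℤ := 1 - 2*n₁ with ha
  set b : ℤ := 1 - 2*n₂ with hb
  set c : ℤ := 1 + 2*n₁ with hc
  set d : ℤ := 1 + 2*n₂ with hd
  set m : ℤ := 1 - 4*n₁*n₂ with hm
  have hac : (1 - 4*n₁^2) = a * c := by ring
  have hbd : (1 - 4*n₂^2) = b * d := by ring
  have hsum : a * d + c * b = 2 * m := by ring
  -- divisibility facts for g
  have hgac : (g : ℤ) ∣ a * c := by rw [hg, ← hac]; exact Int.gcd_dvd_left _ _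
  have hginner : g ∣ Int.gcd (1 - 4*n₂^2) m := by
    have := Int.gcd_dvd_right (a := (1 - 4*n₁^2)) (b := ((Int.gcd (1 - 4*n₂^2) m : ℕ) : ℤ))
    rw [← hg] at this
    exact_mod_cast this
  have hgbd : (g : ℤ) ∣ b * d :=
    hbd ▸ ((Int.natCast_dvd_natCast.mpr hginner).trans (Int.gcd_dvd_left _ _))
  have hgm : (g : ℤ) ∣ m := (Int.natCast_dvd_natCast.mpr hginner).trans (Int.gcd_dvd_right _ _)
  -- divisibility for h, k
  have hha : (h : ℤ) ∣ a := by rw [hh]; exact Int.gcd_dvd_left _ _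
  have hhb : (h : ℤ) ∣ b := by rw [hh]; exact Int.gcd_dvd_right _ _
  have hkc : (k : ℤ) ∣ c := by rw [hk]; exact Int.gcd_dvd_left _ _
  have hkd : (k : ℤ) ∣ d := by rw [hk]; exact Int.gcd_dvd_right _ _
  -- oddness helpers
  have odd2 : ∀ x : ℕ, (x : ℤ) ∣ a → ¬ 2 ∣ x := by
    intro x hx h2
    have : (2 : ℤ) ∣ a := dvd_trans (by exact_mod_cast Int.natCast_dvd_natCast.mpr h2) hx
    obtain ⟨t, ht⟩ := this
    omega
  have hodd : ¬ 2 ∣ h := odd2 h hha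
  have godd : ¬ 2 ∣ g := by
    intro h2
    have : (2 : ℤ) ∣ a * c := dvd_trans (by exact_mod_cast Int.natCast_dvd_natCast.mpr h2) hgac
    rw [← hac] at this
    obtain ⟨t, ht⟩ := this
    have hsq : n₁ ^ 2 = n₁ * n₁ := sq n₁
    rw [hsq] at ht
    obtain ⟨u, hu⟩ : ∃ u : ℤ, u = n₁ * n₁ := ⟨n₁ * n₁, rfl⟩
    rw [← hu] at ht
    omega
  have hcop2 : ∀ x : ℕ, ¬ 2 ∣ x → IsCoprime (x : ℤ) 2 := by
    intro x hx
    rw [Int.isCoprime_iff_gcd_eq_one]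
    have : Nat.gcd x 2 = 1 := by
      rcases (Nat.dvd_prime Nat.prime_two).mp (Nat.gcd_dvd_right x 2) with h1 | h1
      · exact h1
      · exact absurd (h1 ▸ Nat.gcd_dvd_left x 2) hx
    simpa [Int.gcd] using this
  -- h ∣ g and k ∣ g
  have hdvdm : ∀ x : ℕ, (x : ℤ) ∣ 2 * m → ¬ 2 ∣ x → (x : ℤ) ∣ m := by
    intro x hx h2
    exact (hcop2 x h2).dvd_of_dvd_mul_left hx
  have hhg : h ∣ g := by
    have h2m : (h : ℤ) ∣ 2 * m := by
      rw [← hsum]; exact dvd_add (hha.mul_right d) (Dvd.dvd.mul_left hhb c)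
    have hm' : (h : ℤ) ∣ m := hdvdm h h2m hodd
    have : (h : ℤ) ∣ (g : ℤ) := by
      rw [hg]
      exact Int.dvd_coe_gcd (hac ▸ hha.mul_right c)
        ((Int.dvd_coe_gcd (hbd ▸ hhb.mul_right d) hm').trans
          (Int.natCast_dvd_natCast.mpr (dvd_refl _)))
    exact_mod_cast this
  have hkodd : ¬ 2 ∣ k := by
    intro h2
    have : (2 : ℤ) ∣ c := dvd_trans (by exact_mod_cast Int.natCast_dvd_natCast.mpr h2) hkc
    obtain ⟨t, ht⟩ := this
    omega
  have hkg : k ∣ g := by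
    have h2m : (k : ℤ) ∣ 2 * m := by
      rw [← hsum]; exact dvd_add (Dvd.dvd.mul_left hkd a) (hkc.mul_right b)
    have hm' : (k : ℤ) ∣ m := hdvdm k h2m hkodd
    have : (k : ℤ) ∣ (g : ℤ) := by
      rw [hg]
      exact Int.dvd_coe_gcd (hac ▸ Dvd.dvd.mul_left hkc a)
        ((Int.dvd_coe_gcd (hbd ▸ Dvd.dvd.mul_left hkd b) hm').trans
          (Int.natCast_dvd_natCast.mpr (dvd_refl _)))
    exact_mod_cast this
  -- h and k are coprime
  have hcop : Nat.Coprime h k := by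
    have ht : (Nat.gcd h k : ℤ) ∣ 2 := by
      have t1 : (Nat.gcd h k : ℤ) ∣ a := (Int.natCast_dvd_natCast.mpr (Nat.gcd_dvd_left h k)).trans hha
      have t2 : (Nat.gcd h k : ℤ) ∣ c := (Int.natCast_dvd_natCast.mpr (Nat.gcd_dvd_right h k)).trans hkc
      have : (Nat.gcd h k : ℤ) ∣ a + c := dvd_add t1 t2
      have hac2 : a + c = 2 := by ring
      rwa [hac2] at this
    have ht2 : Nat.gcd h k ∣ 2 := by exact_mod_cast ht
    have hto : ¬ 2 ∣ Nat.gcd h k := odd2 _ ((Int.natCast_dvd_natCast.mpr (Nat.gcd_dvd_left h k)).trans hha)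
    rcases (Nat.dvd_prime Nat.prime_two).mp ht2 with h1 | h1
    · exact h1
    · exact absurd (h1 ▸ dvd_refl _) hto
  have hkdvd : h * k ∣ g := hcop.mul_dvd_of_dvd_of_dvd hhg hkg
  -- g ∣ h * k via prime powers
  have hgdvd : g ∣ h * k := by
    rw [Nat.dvd_iff_prime_pow_dvd_dvd]
    intro p e hp hpe
    rcases Nat.eq_zero_or_pos e with rfl | he
    · simp
    have hpn : p.Prime := hp
    have hpz : Prime (p : ℤ) := Nat.prime_iff_prime_int.mp hpn
    have hpg : p ∣ g := (dvd_pow_self p he.ne').trans hpe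
    have hp2 : p ≠ 2 := by rintro rfl; exact godd hpg
    have hpac : ((p : ℤ)) ^ e ∣ a * c := by
      refine dvd_trans ?_ hgac
      exact_mod_cast Int.natCast_dvd_natCast.mpr hpe
    have hpbd : ((p : ℤ)) ^ e ∣ b * d := by
      refine dvd_trans ?_ hgbd
      exact_mod_cast Int.natCast_dvd_natCast.mpr hpe
    have hpm : (p : ℤ) ∣ m := dvd_trans (by exact_mod_cast Int.natCast_dvd_natCast.mpr hpg) hgm
    -- p divides at most one of a,c and at most one of b,d
    have hnotboth : ∀ x y : ℤ, x + y = 2 → (p : ℤ) ∣ x → ¬ (p : ℤ) ∣ y := by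
      intro x y hxy hx hy
      have : (p : ℤ) ∣ 2 := hxy ▸ dvd_add hx hy
      have : p ∣ 2 := by exact_mod_cast this
      have := (Nat.prime_dvd_prime_iff_eq hpn Nat.prime_two).mp this
      exact hp2 this
    by_cases hpa : (p : ℤ) ∣ a
    · by_cases hpb : (p : ℤ) ∣ b
      · -- p^e divides a and b, hence h
        have hpc : ¬ (p : ℤ) ∣ c := hnotboth a c (by ring) hpa
        have hpd : ¬ (p : ℤ) ∣ d := hnotboth b d (by ring) hpb
        have hea : ((p : ℤ)) ^ e ∣ a := hpz.pow_dvd_of_dvd_mul_right e hpc hpac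
        have heb : ((p : ℤ)) ^ e ∣ b := hpz.pow_dvd_of_dvd_mul_right e hpd hpbd
        have : ((p ^ e : ℕ) : ℤ) ∣ (h : ℤ) := by
          rw [hh]
          push_cast
          exact Int.dvd_coe_gcd hea heb
        exact (Int.natCast_dvd_natCast.mp this).mul_right k
      · -- p ∣ a, ¬p ∣ b: impossible
        exfalso
        have hpd : ((p : ℤ)) ^ e ∣ d := hpz.pow_dvd_of_dvd_mul_left e hpb hpbd
        have hpd1 : (p : ℤ) ∣ d := (dvd_pow_self _ he.ne').trans hpd
        have hpad : (p : ℤ) ∣ a * d := hpa.mul_right d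
        have hpcb : (p : ℤ) ∣ c * b := by
          have : (p : ℤ) ∣ 2 * m := hpm.mul_left 2
          rw [← hsum] at this
          exact (dvd_add_right hpad).mp this
        rcases hpz.dvd_mul.mp hpcb with hc' | hb'
        · exact hnotboth a c (by ring) hpa hc'
        · exact hpb hb'
    · by_cases hpb : (p : ℤ) ∣ b
      · -- ¬p ∣ a, p ∣ b: impossible
        exfalso
        have hpc : ((p : ℤ)) ^ e ∣ c := hpz.pow_dvd_of_dvd_mul_left e hpa hpac
        have hpc1 : (p : ℤ) ∣ c := (dvd_pow_self _ he.ne').trans hpc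
        have hpcb : (p : ℤ) ∣ c * b := hpc1.mul_right b
        have hpad : (p : ℤ) ∣ a * d := by
          have : (p : ℤ) ∣ 2 * m := hpm.mul_left 2
          rw [← hsum] at this
          exact (dvd_add_left hpcb).mp this
        rcases hpz.dvd_mul.mp hpad with ha' | hd'
        · exact hpa ha'
        · exact hnotboth b d (by ring) hpb hd'
      · -- p^e divides c and d, hence k
        have hec : ((p : ℤ)) ^ e ∣ c := hpz.pow_dvd_of_dvd_mul_left e hpa hpac
        have hed : ((p : ℤ)) ^ e ∣ d := hpz.pow_dvd_of_dvd_mul_left e hpb hpbd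
        have : ((p ^ e : ℕ) : ℤ) ∣ (k : ℤ) := by
          rw [hk]
          push_cast
          exact Int.dvd_coe_gcd hec hed
        exact (Int.natCast_dvd_natCast.mp this).mul_left h
  exact Nat.dvd_antisymm hgdvd hkdvd
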